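/- On the domain of school-lexicographic preferences over colleagues, the mechanism induced by student-proposing deferred acceptance applied to induced school preferences is the unique stable and strategy-proof mechanism. -/

import Mathlib

/-- A preference profile: each student has a (strict) preference relation over
`Option S`, where `none` is the outside option `s₀` and `some s` is school `s`. -/
abbrev Profile (N S : Type*) := N → Option S → Option S → Prop

/-- A school choice context: strict priorities and capacities for each school. -/
structure SchoolContext (N S : Type*) where
  prio : S → N → N → Prop
  prio_sto : ∀ s, IsStrictTotalOrder N (prio s)
  cap : S → ℕ
  cap_pos : ∀ s, 1 ≤ cap s

/-- Well-formedness of a profile: each student's preference is a strict linear order. -/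
def ProfWF {N S : Type*} (P : Profile N S) : Prop :=
  ∀ i, IsStrictTotalOrder (Option S) (P i)

/-- Feasibility of an assignment: capacities are respected. -/
def Feasible {N S : Type*} (C : SchoolContext N S) (μ : N → Option S) : Prop :=
  ∀ s : S, {i | μ i = some s}.ncard ≤ C.cap s

/-- Individual rationality: no student prefers the outside option to her assignment. -/
def IndRat {N S : Type*} (P : Profile N S) (μ : N → Option S) : Prop :=
  ∀ i, ¬ P i none (μ i)

/-- Non-wastefulness: no student prefers a school with an unfilled seat. -/
def NonWasteful {N S : Type*} (C : SchoolContext N S) (P : Profile N S)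
    (μ : N → Option S) : Prop :=
  ∀ i (s : S), P i (some s) (μ i) → C.cap s ≤ {j | μ j = some s}.ncard

/-- No justified envy. -/
def NoJustifiedEnvy {N S : Type*} (C : SchoolContext N S) (P : Profile N S)
    (μ : N → Option S) : Prop :=
  ∀ i j (s : S), P i (some s) (μ i) → μ j = some s → ¬ C.prio s i j

/-- Stability of a matching. -/
def IsStable {N S : Type*} (C : SchoolContext N S) (P : Profile N S)
    (μ : N → Option S) : Prop :=
  Feasible C μ ∧ IndRat P μ ∧ NonWasteful C P μ ∧ NoJustifiedEnvy C P μ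

/-- Strict part of a (weak) preference relation. -/
def StrictlyPref {α : Type*} (r : α → α → Prop) (a b : α) : Prop := r a b ∧ ¬ r b a

/-- `(pref, P)` is a profile of school-lexicographic preferences over colleagues, with
`P` the induced profile of preferences over schools: each `pref i` is a complete and
transitive preference over (feasible) matchings; matchings giving `i` different schools
are strictly ranked according to `P i`; and `i` is indifferent between matchings giving
her the same school and the same set of schoolmates. -/
def SLCprofile {N S : Type*} (C : SchoolContext N S)
    (pref : N → (N → Option S) → (N → Option S) → Prop) (P : Profile N S) : Prop :=
  ProfWF P ∧
  (∀ i (μ η θ : N → Option S), Feasible C μ → Feasible C η → Feasible C θ →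
      pref i μ η → pref i η θ → pref i μ θ) ∧
  (∀ i (μ η : N → Option S), Feasible C μ → Feasible C η → (pref i μ η ∨ pref i η μ)) ∧
  (∀ i (μ η : N → Option S), Feasible C μ → Feasible C η → μ i ≠ η i →
      (StrictlyPref (pref i) μ η ↔ P i (μ i) (η i))) ∧
  (∀ i (μ η : N → Option S) (s : Option S), Feasible C μ → Feasible C η →
      StrictlyPref (pref i) μ η → μ i = s → η i = s → {j | μ j = s} ≠ {j | η j = s})

-- auxiliary lemmas

lemma sto_asymm {α : Type*} {r : α → α → Prop} (h : IsStrictTotalOrder α r)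
    {a b : α} (hab : r a b) : ¬ r b a := fun hba => h.irrefl a (h.trans _ _ _ hab hba)

lemma sto_resolve {α : Type*} {r : α → α → Prop} (h : IsStrictTotalOrder α r)
    {a b : α} (hab : ¬ r a b) (hne : a ≠ b) : r b a := by
  rcases (haveI := h; trichotomous_of r a b) with h1 | h1 | h1
  · exact absurd h1 hab
  · exact absurd h1 hne
  · exact h1

lemma sto_negtrans {α : Type*} {r : α → α → Prop} (h : IsStrictTotalOrder α r)
    {a b c : α} (h1 : ¬ r b a) (h2 : ¬ r c b) : ¬ r c a := by
  intro hca
  rcases (haveI := h; trichotomous_of r a b) with h3 | h3 | h3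
  · exact h2 (h.trans _ _ _ hca h3)
  · exact h2 (h3 ▸ hca)
  · exact h1 h3

/-- Fiber cardinality inequality: a student-optimal stable `ν` fills each school
weakly less than any stable `μ`. -/
lemma fiber_le {N S : Type*} [Finite N] (C : SchoolContext N S) (P : Profile N S)
    (hP : ProfWF P) (μ ν : N → Option S) (hμ : IsStable C P μ) (hνF : Feasible C ν)
    (hopt : ∀ j, ¬ P j (μ j) (ν j)) (s : S) :
    {i | ν i = some s}.ncard ≤ {i | μ i = some s}.ncard := by
  by_contra h
  push_neg at h
  have hsub : ¬ {i | ν i = some s} ⊆ {i | μ i = some s} := by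
    intro hs
    exact absurd (Set.ncard_le_ncard hs (Set.toFinite _)) (not_le.2 h)
  obtain ⟨j, hj1, hj2⟩ := Set.not_subset.1 hsub
  simp only [Set.mem_setOf_eq] at hj1 hj2
  have hne : μ j ≠ ν j := fun he => hj2 (he.trans hj1)
  have hPj : P j (ν j) (μ j) := sto_resolve (hP j) (hopt j) hne
  rw [hj1] at hPj
  have hw := hμ.2.2.1 j s hPj
  have hf := hνF s
  omega

/-- Matched-set monotonicity (pointwise). -/
lemma matched_mono {N S : Type*} (P : Profile N S) (hP : ProfWF P)
    (μ ν : N → Option S) (hμIR : IndRat P μ)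
    (hopt : ∀ j, ¬ P j (μ j) (ν j)) {j : N} (hj : μ j ≠ none) : ν j ≠ none := by
  intro hv
  have hne : μ j ≠ ν j := fun he => hj (he.trans hv)
  have := sto_resolve (hP j) (hopt j) hne
  rw [hv] at this
  exact hμIR j this

/-- Rural-hospital style: for a stable `μ` and a student-optimal stable `ν`,
the matched sets coincide; in particular anyone matched under `ν` is matched under `μ`. -/
lemma matched_rev {N S : Type*} [Finite N] (C : SchoolContext N S) (P : Profile N S)
    (hP : ProfWF P) (μ ν : N → Option S) (hμ : IsStable C P μ) (hν : IsStable C P ν)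
    (hopt : ∀ j, ¬ P j (μ j) (ν j)) {j : N} (hj : ν j ≠ none) : μ j ≠ none := by
  classical
  letI := Fintype.ofFinite N
  set A : Finset N := Finset.univ.filter (fun k => μ k ≠ none) with hA
  set B : Finset N := Finset.univ.filter (fun k => ν k ≠ none) with hB
  have hAB : A ⊆ B := by
    intro k hk
    simp only [hA, hB, Finset.mem_filter, Finset.mem_univ, true_and] at hk ⊢
    exact matched_mono P hP μ ν hμ.2.1 hopt hk
  set T : Finset S := (Finset.univ.image μ ∪ Finset.univ.image ν).eraseNone with hT
  have hcards : ∀ θ : N → Option S, (∀ k s, θ k = some s → s ∈ T) →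
      (Finset.univ.filter (fun k => θ k ≠ none)).card
        = ∑ s ∈ T, (Finset.univ.filter (fun k => θ k = some s)).card := by
    intro θ hθ
    rw [← Finset.card_biUnion]
    · congr 1
      ext k
      simp only [Finset.mem_filter, Finset.mem_univ, true_and, Finset.mem_biUnion]
      constructor
      · intro hk
        obtain ⟨s, hs⟩ := Option.ne_none_iff_exists'.1 hk
        exact ⟨s, hθ k s hs, by simp [hs]⟩
      · rintro ⟨s, -, hs⟩
        rw [hs]
        exact Option.some_ne_none s
    · intro s _ s' _ hss
      rw [Function.onFun, Finset.disjoint_left]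
      intro k hk hk'
      simp only [Finset.mem_filter, Finset.mem_univ, true_and] at hk hk'
      exact hss (Option.some_injective S (hk ▸ hk'))
  have hμT : ∀ k s, μ k = some s → s ∈ T := by
    intro k s hs
    simp only [hT, Finset.mem_eraseNone, Finset.mem_union, Finset.mem_image]
    exact Or.inl ⟨k, Finset.mem_univ k, hs⟩
  have hνT : ∀ k s, ν k = some s → s ∈ T := by
    intro k s hs
    simp only [hT, Finset.mem_eraseNone, Finset.mem_union, Finset.mem_image]
    exact Or.inr ⟨k, Finset.mem_univ k, hs⟩
  have hfiber : ∀ s : S, (Finset.univ.filter (fun k => ν k = some s)).card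
      ≤ (Finset.univ.filter (fun k => μ k = some s)).card := by
    intro s
    have := fiber_le C P hP μ ν hμ hν.1 hopt s
    have e1 : {i | ν i = some s}.ncard = (Finset.univ.filter (fun k => ν k = some s)).card := by
      rw [Set.ncard_eq_toFinset_card', Set.toFinset_setOf]
    have e2 : {i | μ i = some s}.ncard = (Finset.univ.filter (fun k => μ k = some s)).card := by
      rw [Set.ncard_eq_toFinset_card', Set.toFinset_setOf]
    omega
  have hcard : B.card ≤ A.card := by
    rw [hA, hB, hcards μ hμT, hcards ν hνT]
    exact Finset.sum_le_sum (fun s _ => hfiber s)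
  have : A = B := Finset.eq_of_subset_of_card_le hAB hcard
  have hjB : j ∈ B := by simp [hB, hj]
  rw [← this] at hjB
  simpa [hA] using hjB

-- lexicographic "truncation" preference: `some t` on top, then `none`, then the rest by `P i`
open Classical in
noncomputable def lexRk {S : Type*} (t : S) (x : Option S) : ℕ :=
  if x = some t then 0 else if x = none then 1 else 2

lemma lexRk_top {S : Type*} (t : S) : lexRk t (some t) = 0 := by simp [lexRk]
lemma lexRk_none {S : Type*} (t : S) : lexRk t none = 1 := by simp [lexRk]
lemma lexRk_other {S : Type*} {t s : S} (h : s ≠ t) : lexRk t (some s) = 2 := by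
  simp [lexRk, h]
lemma lexRk_eq_zero {S : Type*} {t : S} {x : Option S} (h : lexRk t x = 0) : x = some t := by
  by_contra hx
  rcases x with _ | s
  · rw [lexRk_none] at h; omega
  · rw [lexRk_other (fun he => hx (by rw [he]))] at h; omega

def lexP {N S : Type*} (P : Profile N S) (i : N) (t : S) : Option S → Option S → Prop :=
  fun a b => lexRk t a < lexRk t b ∨ (lexRk t a = lexRk t b ∧ P i a b)

lemma lexP_sto {N S : Type*} (P : Profile N S) (i : N) (t : S)
    (h : IsStrictTotalOrder (Option S) (P i)) :
    IsStrictTotalOrder (Option S) (lexP P i t) := by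
  refine { trichotomous := ?_, irrefl := ?_, trans := ?_ }
  · -- trichotomous
    intro a b
    refine fun h1 h2 => (?_ : lexP P i t a b ∨ a = b ∨ lexP P i t b a).elim (fun h => absurd h h1) (fun h => h.elim id (fun h => absurd h h2))
    by_cases hab : a = b
    · exact Or.inr (Or.inl hab)
    · rcases lt_trichotomy (lexRk t a) (lexRk t b) with h1 | h1 | h1
      · exact Or.inl (Or.inl h1)
      · rcases (haveI := h; trichotomous_of (P i) a b) with h2 | h2 | h2
        · exact Or.inl (Or.inr ⟨h1, h2⟩)
        · exact absurd h2 hab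
        · exact Or.inr (Or.inr (Or.inr ⟨h1.symm, h2⟩))
      · exact Or.inr (Or.inr (Or.inl h1))
  · -- irrefl
    intro a
    rintro (h1 | ⟨-, h2⟩)
    · omega
    · exact h.irrefl a h2
  · -- trans
    rintro a b c (h1 | ⟨h1, h1'⟩) (h2 | ⟨h2, h2'⟩)
    · exact Or.inl (h1.trans h2)
    · exact Or.inl (h2 ▸ h1)
    · exact Or.inl (h1 ▸ h2)
    · exact Or.inr ⟨h1.trans h2, h.trans _ _ _ h1' h2'⟩




/-- On the domain of school-lexicographic preferences over colleagues, the mechanism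
induced by deferred acceptance applied to induced school preferences is the unique
stable and strategy-proof mechanism. -/
theorem stmt7 {N S : Type*} [Finite N] [DecidableEq N] (C : SchoolContext N S)
    (DA : Profile N S → (N → Option S))
    (hDAstable : ∀ P, ProfWF P → IsStable C P (DA P))
    (hDAopt : ∀ P, ProfWF P → ∀ μ, IsStable C P μ → ∀ i, ¬ P i (μ i) (DA P i))
    (Γ : (N → (N → Option S) → (N → Option S) → Prop) → (N → Option S))
    (hΓstable : ∀ pref P, SLCprofile C pref P → IsStable C P (Γ pref))
    (hΓSP : ∀ (i : N) (pref : N → (N → Option S) → (N → Option S) → Prop)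
        (P : Profile N S) (pref' : N → (N → Option S) → (N → Option S) → Prop)
        (P' : Profile N S),
        SLCprofile C pref P → SLCprofile C pref' P' →
        (∀ j, j ≠ i → pref' j = pref j ∧ P' j = P j) →
        ¬ StrictlyPref (pref i) (Γ pref') (Γ pref)) :
    ∀ pref P, SLCprofile C pref P → Γ pref = DA P := by
  intro pref P hSLC
  obtain ⟨hWF, htrans, htot, hkey, hlast⟩ := hSLC
  have hSLCfull : SLCprofile C pref P := ⟨hWF, htrans, htot, hkey, hlast⟩
  have hν : IsStable C P (Γ pref) := hΓstable pref P hSLCfull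
  have hμ : IsStable C P (DA P) := hDAstable P hWF
  funext i
  by_contra hne
  set ν := Γ pref with hνdef
  set μ := DA P with hμdef
  have hopt : ∀ j, ¬ P j (ν j) (μ j) := hDAopt P hWF ν hν
  have hPi : P i (μ i) (ν i) := sto_resolve (hWF i) (hopt i) hne
  have hμi : μ i ≠ none := by
    intro h
    rw [h] at hPi
    exact hν.2.1 i hPi
  obtain ⟨t, ht⟩ := Option.ne_none_iff_exists'.1 hμi
  -- the manipulated profile: student i reports "only t acceptable"
  set L : Option S → Option S → Prop := lexP P i t with hL
  set P'' : Profile N S := Function.update P i L with hP''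
  set pref' : N → (N → Option S) → (N → Option S) → Prop :=
    Function.update pref i (fun μ' η' => ¬ L (η' i) (μ' i)) with hpref'
  have hP''i : P'' i = L := Function.update_self i L P
  have hP''j : ∀ j, j ≠ i → P'' j = P j := fun j hj => Function.update_of_ne hj L P
  have hpref'i : pref' i = (fun μ' η' => ¬ L (η' i) (μ' i)) := Function.update_self i _ pref
  have hpref'j : ∀ j, j ≠ i → pref' j = pref j := fun j hj => Function.update_of_ne hj _ pref
  have hLsto : IsStrictTotalOrder (Option S) L := lexP_sto P i t (hWF i)
  have hWF'' : ProfWF P'' := by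
    intro j
    by_cases hj : j = i
    · rw [hj, hP''i]; exact hLsto
    · rw [hP''j j hj]; exact hWF j
  -- nothing is L-better than `some t`
  have hLtop : ∀ x, ¬ L x (some t) := by
    intro x hx
    rcases hx with h1 | ⟨h1, h2⟩
    · rw [lexRk_top] at h1; omega
    · exact hWF i |>.irrefl _ ((lexRk_eq_zero (h1.trans (lexRk_top t))) ▸ h2)
  -- `none` is L-better than any school other than t
  have hLnone : ∀ s : S, s ≠ t → L none (some s) := by
    intro s hs
    left
    rw [lexRk_none, lexRk_other hs]
    omega
  -- the manipulated SLC profile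
  have hSLC'' : SLCprofile C pref' P'' := by
    refine ⟨hWF'', ?_, ?_, ?_, ?_⟩
    · intro j μ' η' θ' hμ' hη' hθ' h1 h2
      by_cases hj : j = i
      · subst hj
        rw [hpref'i] at h1 h2 ⊢
        exact sto_negtrans hLsto h1 h2
      · rw [hpref'j j hj] at h1 h2 ⊢
        exact htrans j μ' η' θ' hμ' hη' hθ' h1 h2
    · intro j μ' η' hμ' hη'
      by_cases hj : j = i
      · subst hj
        rw [hpref'i]
        by_cases hLe : L (η' j) (μ' j)
        · exact Or.inr (sto_asymm hLsto hLe)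
        · exact Or.inl hLe
      · rw [hpref'j j hj]
        exact htot j μ' η' hμ' hη'
    · intro j μ' η' hμ' hη' hnej
      by_cases hj : j = i
      · subst hj
        rw [hpref'i, hP''i]
        constructor
        · rintro ⟨h1, h2⟩
          rw [not_not] at h2
          exact h2
        · intro h1
          exact ⟨sto_asymm hLsto h1, not_not_intro h1⟩
      · rw [hpref'j j hj, hP''j j hj]
        exact hkey j μ' η' hμ' hη' hnej
    · intro j μ' η' s hμ' hη' hsp h1 h2
      by_cases hj : j = i
      · subst hj
        rw [hpref'i] at hsp
        obtain ⟨-, h4⟩ := hsp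
        rw [not_not, h1, h2] at h4
        exact absurd h4 (hLsto.irrefl s)
      · rw [hpref'j j hj] at hsp
        exact hlast j μ' η' s hμ' hη' hsp h1 h2
  -- μ = DA P is stable under the manipulated profile P''
  have hμ'' : IsStable C P'' μ := by
    refine ⟨hμ.1, ?_, ?_, ?_⟩
    · intro j
      by_cases hj : j = i
      · subst hj
        rw [hP''i, ht]
        exact hLtop none
      · rw [hP''j j hj]
        exact hμ.2.1 j
    · intro j s hjs
      by_cases hj : j = i
      · rw [hj, hP''i, ht] at hjs
        exact absurd hjs (hLtop _)
      · rw [hP''j j hj] at hjs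
        exact hμ.2.2.1 j s hjs
    · intro j k s hjs hks
      by_cases hj : j = i
      · rw [hj, hP''i, ht] at hjs
        exact absurd hjs (hLtop _)
      · rw [hP''j j hj] at hjs
        exact hμ.2.2.2 j k s hjs hks
  -- Γ pref' is stable under P''
  have hν'' : IsStable C P'' (Γ pref') := hΓstable pref' P'' hSLC''
  -- rural hospitals: i is matched in every stable matching under P''
  set κ := DA P'' with hκ
  have hκst : IsStable C P'' κ := hDAstable P'' hWF''
  have hκi : κ i ≠ none :=
    matched_mono P'' hWF'' μ κ hμ''.2.1 (hDAopt P'' hWF'' μ hμ'') (ht ▸ Option.some_ne_none t)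
  have hν'i : Γ pref' i ≠ none :=
    matched_rev C P'' hWF'' (Γ pref') κ hν'' hκst (hDAopt P'' hWF'' (Γ pref') hν'') hκi
  obtain ⟨s, hs⟩ := Option.ne_none_iff_exists'.1 hν'i
  -- individual rationality under P'' forces Γ pref' i = some t
  have hst : s = t := by
    by_contra hst
    have := hν''.2.1 i
    rw [hP''i, hs] at this
    exact this (hLnone s hst)
  rw [hst] at hs
  -- strategy-proofness is violated
  have hSP := hΓSP i pref P pref' P'' hSLCfull hSLC''
    (fun j hj => ⟨hpref'j j hj, hP''j j hj⟩)
  apply hSP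
  have hneq : Γ pref' i ≠ ν i := by
    rw [hs, ← ht]
    exact Ne.symm hne
  refine (hkey i (Γ pref') ν hν''.1 hν.1 hneq).2 ?_
  rw [hs, ← ht]
  exact hPi
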